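/- For the 1-safe Petri net constructed from a CSP instance with domain size dom and degree deg (maximum number of constraints any variable appears in), the benefit depth is at most 2 + deg·(dom + 1). -/
import Mathlib


/-- A Petri net: places `P`, transitions `T`, incidence functions. -/
structure PetriNet (P T : Type) where
  Pre : P → T → ℕ
  Post : P → T → ℕ

variable {P T : Type}

def enabled (N : PetriNet P T) (M : P → ℕ) (t : T) : Prop := ∀ p, N.Pre p t ≤ M p

def fire (N : PetriNet P T) (M : P → ℕ) (t : T) : P → ℕ :=
  fun p => M p - N.Pre p t + N.Post p t

def step (N : PetriNet P T) (M M' : P → ℕ) : Prop :=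
  ∃ t, enabled N M t ∧ M' = fire N M t

def reachable (N : PetriNet P T) (M0 M : P → ℕ) : Prop :=
  Relation.ReflTransGen (step N) M0 M

/-- `1`-safety: every reachable marking has at most one token per place. -/
def oneSafe (N : PetriNet P T) (M0 : P → ℕ) : Prop :=
  ∀ M, reachable N M0 M → ∀ p, M p ≤ 1

def incident (N : PetriNet P T) (p : P) (t : T) : Prop := 1 ≤ N.Pre p t + N.Post p t


/-- A CSP instance with `n` variables, `m` constraints and domain `Fin dom`: each
constraint has a scope and a set of admissible tuples (given as assignments, compared
only on the scope). -/
structure CSP (n m dom : ℕ) where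
  scope : Fin m → Finset (Fin n)
  adm : Fin m → Finset (Fin n → Fin dom)

/-- Places of the net constructed from a CSP instance. -/
inductive CPl (n m dom : ℕ) : Type
  | q (i : Fin n)
  | qv (i : Fin n) (j : Fin m) (d : Fin dom)
  | C (j : Fin m)
  | g
deriving DecidableEq

/-- Transitions of the net constructed from a CSP instance. -/
inductive CTr (n m dom : ℕ) : Type
  | t (i : Fin n) (d : Fin dom)
  | tc (i : Fin n) (j : Fin m) (d : Fin dom)
  | con (j : Fin m) (f : Fin n → Fin dom)
  | fin

variable {n m dom : ℕ}

/-- Input incidence of the CSP net: `t i d` consumes the token of `q i`; the cleanup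
`tc i j d` consumes a token from `q[i]_j^d`; the constraint-check `con j f` (for an
admissible tuple `f`) consumes the tokens `q[i]_j^{f i}` for the variables of its
scope (non-admissible tuples are blocked); `fin` consumes one token from each `C j`. -/
def cspPre (I : CSP n m dom) : CPl n m dom → CTr n m dom → ℕ := fun p τ =>
  match τ with
  | .t i _ => if p = .q i then 1 else 0
  | .tc i j d => if p = .qv i j d then 1 else 0
  | .con j f => if f ∈ I.adm j then (if ∃ i ∈ I.scope j, p = .qv i j (f i) then 1 else 0)
      else (if p = .C j then 2 else 0)
  | .fin => if ∃ j, p = .C j then 1 else 0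

/-- Output incidence of the CSP net: `t i d` puts a token in `q[i]_j^d` for every
constraint `j` containing `i`; `con j f` puts a token in `C j`; `fin` puts a token
in `g`. -/
def cspPost (I : CSP n m dom) : CPl n m dom → CTr n m dom → ℕ := fun p τ =>
  match τ with
  | .t i d => if ∃ j, i ∈ I.scope j ∧ p = .qv i j d then 1 else 0
  | .tc _ _ _ => 0
  | .con j f => if f ∈ I.adm j then (if p = .C j then 1 else 0) else 0
  | .fin => if p = .g then 1 else 0

/-- The Petri net constructed from the CSP instance. -/
def cspNet (I : CSP n m dom) : PetriNet (CPl n m dom) (CTr n m dom) :=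
  ⟨cspPre I, cspPost I⟩

/-- `flows p p'`: `p'` is an output place of an output transition of `p`. -/
def flows (N : PetriNet P T) (p p' : P) : Prop :=
  ∃ t, N.Pre p t = 1 ∧ N.Post p' t = 1

/-- The set of places benefited by `p`: the smallest set containing `p` and closed
under taking output places of output transitions. -/
def ben (N : PetriNet P T) (p : P) : Set P :=
  {p' | Relation.ReflTransGen (flows N) p p'}

lemma ben_subset {N : PetriNet P T} {p : P} {S : Set P} (hp : p ∈ S)
    (hcl : ∀ a ∈ S, ∀ b, flows N a b → b ∈ S) : ben N p ⊆ S := by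
  intro x hx
  induction hx with
  | refl => exact hp
  | tail _ h ih => exact hcl _ ih _ h

lemma flows_cases (I : CSP n m dom) {p p' : CPl n m dom} (h : flows (cspNet I) p p') :
    (∃ i j d, p = .q i ∧ p' = .qv i j d ∧ i ∈ I.scope j) ∨
    (∃ i j d, p = .qv i j d ∧ p' = .C j ∧ i ∈ I.scope j) ∨
    (∃ j, p = .C j ∧ p' = .g) := by
  obtain ⟨t, h1, h2⟩ := h
  cases t with
  | t i d =>
    have hp : p = .q i := by by_contra hc; simp [cspNet, cspPre, hc] at h1
    have hq : ∃ j, i ∈ I.scope j ∧ p' = .qv i j d := by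
      by_contra hc; simp [cspNet, cspPost, hc] at h2
    obtain ⟨j, hj, hp'⟩ := hq
    exact Or.inl ⟨i, j, d, hp, hp', hj⟩
  | tc i j d => simp [cspNet, cspPost] at h2
  | con j f =>
    have hf : f ∈ I.adm j := by by_contra hc; simp [cspNet, cspPost, hc] at h2
    have hp' : p' = .C j := by by_contra hc; simp [cspNet, cspPost, hf, hc] at h2
    have hq : ∃ i ∈ I.scope j, p = .qv i j (f i) := by
      by_contra hc; simp [cspNet, cspPre, hf, hc] at h1
    obtain ⟨i, hi, hp⟩ := hq
    exact Or.inr (Or.inl ⟨i, j, f i, hp, hp', hi⟩)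
  | fin =>
    have hq : ∃ j, p = .C j := by by_contra hc; simp [cspNet, cspPre, hc] at h1
    have hp' : p' = .g := by by_contra hc; simp [cspNet, cspPost, hc] at h2
    obtain ⟨j, hp⟩ := hq
    exact Or.inr (Or.inr ⟨j, hp, hp'⟩)

/-- The benefit depth of the net constructed from a CSP instance with domain size
`dom` and degree `deg` is at most `2 + deg·(dom + 1)`. -/
theorem cspNet_benefit_depth_le (I : CSP n m dom) (deg : ℕ)
    (hdeg : ∀ i : Fin n, (Finset.univ.filter fun j => i ∈ I.scope j).card ≤ deg) :
    ∀ p : CPl n m dom, Set.ncard (ben (cspNet I) p) ≤ 2 + deg * (dom + 1) := by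
  intro p
  cases p with
  | g =>
    have hsub : ben (cspNet I) (.g) ⊆ ({CPl.g} : Set (CPl n m dom)) := by
      apply ben_subset (by simp)
      intro a ha b hb
      rcases flows_cases I hb with ⟨i, j, d, hp, _⟩ | ⟨i, j, d, hp, _⟩ | ⟨j, hp, _⟩ <;>
        simp_all
    calc Set.ncard (ben (cspNet I) (.g)) ≤ Set.ncard ({CPl.g} : Set (CPl n m dom)) :=
          Set.ncard_le_ncard hsub (Set.finite_singleton _)
      _ ≤ 2 + deg * (dom + 1) := by rw [Set.ncard_singleton]; omega
  | C j =>
    have hsub : ben (cspNet I) (.C j) ⊆ ({CPl.C j, CPl.g} : Set (CPl n m dom)) := by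
      apply ben_subset (by simp)
      intro a ha b hb
      rcases flows_cases I hb with ⟨i, j', d, hp, _⟩ | ⟨i, j', d, hp, _⟩ | ⟨j', hp, hp'⟩ <;>
        simp_all
    calc Set.ncard (ben (cspNet I) (.C j)) ≤ Set.ncard ({CPl.C j, CPl.g} : Set (CPl n m dom)) :=
          Set.ncard_le_ncard hsub ((Set.finite_singleton _).insert _)
      _ ≤ 2 := Set.ncard_insert_le _ _ |>.trans (by simp)
      _ ≤ 2 + deg * (dom + 1) := by omega
  | qv i j d =>
    rcases Nat.eq_zero_or_pos deg with hd0 | hdpos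
    · -- deg = 0 : no variable occurs in any scope
      have hno : ∀ (i' : Fin n) (j' : Fin m), i' ∉ I.scope j' := by
        intro i' j' hmem
        have := hdeg i'
        rw [hd0, Nat.le_zero, Finset.card_eq_zero] at this
        have : j' ∈ (Finset.univ.filter fun j => i' ∈ I.scope j) := by
          simp [hmem]
        simp_all
      have hsub : ben (cspNet I) (.qv i j d) ⊆ ({CPl.qv i j d} : Set (CPl n m dom)) := by
        apply ben_subset (by simp)
        intro a ha b hb
        rcases flows_cases I hb with ⟨i', j', d', hp, _, hs⟩ | ⟨i', j', d', hp, _, hs⟩ |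
          ⟨j', hp, _⟩ <;> first | exact absurd hs (hno _ _) | simp_all
      calc Set.ncard (ben (cspNet I) (.qv i j d))
          ≤ Set.ncard ({CPl.qv i j d} : Set (CPl n m dom)) :=
            Set.ncard_le_ncard hsub (Set.finite_singleton _)
        _ ≤ 2 + deg * (dom + 1) := by rw [Set.ncard_singleton]; omega
    · have hdom : 1 ≤ dom := d.pos
      have hsub : ben (cspNet I) (.qv i j d) ⊆
          ({CPl.qv i j d, CPl.C j, CPl.g} : Set (CPl n m dom)) := by
        apply ben_subset (by simp)
        intro a ha b hb
        rcases flows_cases I hb with ⟨i', j', d', hp, hp', _⟩ | ⟨i', j', d', hp, hp', _⟩ |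
          ⟨j', hp, hp'⟩ <;> simp_all
      have h3 : Set.ncard ({CPl.qv i j d, CPl.C j, CPl.g} : Set (CPl n m dom)) ≤ 3 := by
        refine (Set.ncard_insert_le _ _).trans ?_
        have := (Set.ncard_insert_le (CPl.C j) ({CPl.g} : Set (CPl n m dom)))
        simp only [Set.ncard_singleton] at this
        omega
      have hfin : ({CPl.qv i j d, CPl.C j, CPl.g} : Set (CPl n m dom)).Finite :=
        (((Set.finite_singleton _).insert _).insert _)
      have hb : 2 ≤ deg * (dom + 1) := by
        calc 2 = 1 * (1 + 1) := by norm_num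
          _ ≤ deg * (dom + 1) := Nat.mul_le_mul hdpos (by omega)
      calc Set.ncard (ben (cspNet I) (.qv i j d))
          ≤ Set.ncard ({CPl.qv i j d, CPl.C j, CPl.g} : Set (CPl n m dom)) :=
            Set.ncard_le_ncard hsub hfin
        _ ≤ 3 := h3
        _ ≤ 2 + deg * (dom + 1) := by omega
  | q i =>
    set F : Finset (Fin m) := Finset.univ.filter (fun j => i ∈ I.scope j) with hF
    set S : Finset (CPl n m dom) :=
      insert (CPl.q i) (insert CPl.g
        (F.biUnion fun j => insert (CPl.C j)
          (Finset.univ.image fun d : Fin dom => CPl.qv i j d))) with hS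
    have hsub : ben (cspNet I) (.q i) ⊆ (S : Set (CPl n m dom)) := by
      apply ben_subset (by simp [hS])
      intro a ha b hb
      rcases flows_cases I hb with ⟨i', j', d', hp, hp', hs⟩ | ⟨i', j', d', hp, hp', hs⟩ |
        ⟨j', hp, hp'⟩
      · -- a = q i', b = qv i' j' d'
        subst hp hp'
        have hii : i' = i := by
          simp only [hS, Finset.coe_insert, Set.mem_insert_iff, Finset.mem_coe,
            Finset.mem_biUnion, Finset.mem_insert, Finset.mem_image] at ha
          rcases ha with h | h | ⟨j0, _, h | ⟨d0, _, h⟩⟩ <;> simp_all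
        subst hii
        have hjF : j' ∈ F := by simp [hF, hs]
        simp only [hS, Finset.coe_insert, Set.mem_insert_iff, Finset.mem_coe,
          Finset.mem_biUnion, Finset.mem_insert, Finset.mem_image]
        exact Or.inr (Or.inr ⟨j', hjF, Or.inr ⟨d', Finset.mem_univ _, rfl⟩⟩)
      · -- a = qv i' j' d', b = C j'
        subst hp hp'
        have hii : i' = i := by
          simp only [hS, Finset.coe_insert, Set.mem_insert_iff, Finset.mem_coe,
            Finset.mem_biUnion, Finset.mem_insert, Finset.mem_image] at ha
          rcases ha with h | h | ⟨j0, _, h | ⟨d0, _, h⟩⟩ <;> simp_all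
        subst hii
        have hjF : j' ∈ F := by simp [hF, hs]
        simp only [hS, Finset.coe_insert, Set.mem_insert_iff, Finset.mem_coe,
          Finset.mem_biUnion, Finset.mem_insert, Finset.mem_image]
        exact Or.inr (Or.inr ⟨j', hjF, Or.inl rfl⟩)
      · -- a = C j', b = g
        subst hp hp'
        simp [hS]
    have hcard : S.card ≤ 2 + deg * (dom + 1) := by
      refine (Finset.card_insert_le _ _).trans ?_
      have h2 : (insert CPl.g
          (F.biUnion fun j => insert (CPl.C j)
            (Finset.univ.image fun d : Fin dom => CPl.qv i j d))).card
          ≤ 1 + F.card * (dom + 1) := by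
        refine (Finset.card_insert_le _ _).trans ?_
        have hbi : (F.biUnion fun j => insert (CPl.C j)
            (Finset.univ.image fun d : Fin dom => CPl.qv i j d)).card
            ≤ F.card * (dom + 1) := by
          refine (Finset.card_biUnion_le).trans ?_
          have heach : ∀ j ∈ F, (insert (CPl.C j)
              (Finset.univ.image fun d : Fin dom => CPl.qv i j d)).card ≤ dom + 1 := by
            intro j _
            refine (Finset.card_insert_le _ _).trans ?_
            have := Finset.card_image_le (s := (Finset.univ : Finset (Fin dom)))
              (f := fun d : Fin dom => CPl.qv i j d)
            simp at this
            omega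
          calc (∑ j ∈ F, (insert (CPl.C j)
                (Finset.univ.image fun d : Fin dom => CPl.qv i j d)).card)
              ≤ ∑ _j ∈ F, (dom + 1) := Finset.sum_le_sum heach
            _ = F.card * (dom + 1) := by rw [Finset.sum_const, smul_eq_mul]
        omega
      have hFdeg : F.card ≤ deg := hdeg i
      have : F.card * (dom + 1) ≤ deg * (dom + 1) := Nat.mul_le_mul_right _ hFdeg
      omega
    calc Set.ncard (ben (cspNet I) (.q i)) ≤ Set.ncard (S : Set (CPl n m dom)) :=
          Set.ncard_le_ncard hsub S.finite_toSet
      _ = S.card := Set.ncard_coe_finset S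
      _ ≤ 2 + deg * (dom + 1) := hcard
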